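/- arXiv:1706.10191 — 5 statements merged into one kernel-verified Lean document; each statement's English description precedes it below -/
import Mathlib

section
/- In the POP formulation, suppose y,z satisfy the range constraints z(v,1)=0, y(H,v)=0, the transitivity constraints y(i,v) ≥ y(i+1,v), the complementarity constraints y(i,v)+z(v,i+1)=1, and additionally for every edge (u,v) and color i: y(i,u)+z(u,i)+y(i,v)+z(v,i) ≥ 1. Then the map c sending each vertex v to the unique color i with y(i,v)=z(v,i)=0 is a proper coloring of G. -/
open Finset

/-- In the POP formulation, any feasible solution yields a proper coloring:
the map sending each vertex `v` to the unique color `i` with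
`y i v = z v i = 0` assigns different colors to adjacent vertices. -/
theorem pop_gives_proper_coloring
    {V : Type*} (G : SimpleGraph V) (H : ℕ) (hH : 1 ≤ H)
    (y : ℕ → V → ℕ) (z : V → ℕ → ℕ)
    (hybin : ∀ i ∈ Icc 1 H, ∀ v : V, y i v = 0 ∨ y i v = 1)
    (hzbin : ∀ v : V, ∀ i ∈ Icc 1 H, z v i = 0 ∨ z v i = 1)
    (hz1 : ∀ v : V, z v 1 = 0)
    (hyH : ∀ v : V, y H v = 0)
    (hmono : ∀ v : V, ∀ i, 1 ≤ i → i < H → y (i + 1) v ≤ y i v)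
    (hcomp : ∀ v : V, ∀ i, 1 ≤ i → i < H → y i v + z v (i + 1) = 1)
    (hedge : ∀ u v : V, G.Adj u v → ∀ i ∈ Icc 1 H,
      1 ≤ y i u + z u i + y i v + z v i)
    (c : V → ℕ)
    (hc : ∀ v : V, c v ∈ Icc 1 H ∧ y (c v) v = 0 ∧ z v (c v) = 0) :
    ∀ u v : V, G.Adj u v → c u ≠ c v := by
  intro u v hadj hcuv
  obtain ⟨hmem, hyu, hzu⟩ := hc u
  obtain ⟨_, hyv, hzv⟩ := hc v
  have := hedge u v hadj (c u) hmem
  rw [hyu, hzu, hcuv, hyv, hzv] at this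
  omega
end

section
/- In the POP formulation with chosen vertex q, suppose in addition to the constraints guaranteeing a proper coloring c, the constraints y(i,q) ≥ y(i,v) hold for all vertices v and colors i < H. Then c(v) ≤ c(q) for all vertices v, and the number of colors used by c is at most 1 + ∑_{i=1}^H y(i,q). -/
open Finset

/-- In the POP formulation with chosen vertex `q`, the constraints
`y i q ≥ y i v` force `q` to receive the maximal color, and the number of
colors used by the induced coloring is at most `1 + ∑ i, y i q`. -/
theorem pop_objective_bounds_number_of_colors
    {V : Type*} [Fintype V] [DecidableEq V] (G : SimpleGraph V)
    (H : ℕ) (hH : 1 ≤ H) (q : V)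
    (y : ℕ → V → ℕ) (z : V → ℕ → ℕ)
    (hybin : ∀ i ∈ Icc 1 H, ∀ v : V, y i v = 0 ∨ y i v = 1)
    (hzbin : ∀ v : V, ∀ i ∈ Icc 1 H, z v i = 0 ∨ z v i = 1)
    (hz1 : ∀ v : V, z v 1 = 0)
    (hyH : ∀ v : V, y H v = 0)
    (hmono : ∀ v : V, ∀ i, 1 ≤ i → i < H → y (i + 1) v ≤ y i v)
    (hcomp : ∀ v : V, ∀ i, 1 ≤ i → i < H → y i v + z v (i + 1) = 1)
    (hedge : ∀ u v : V, G.Adj u v → ∀ i ∈ Icc 1 H,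
      1 ≤ y i u + z u i + y i v + z v i)
    (hq : ∀ v : V, ∀ i, 1 ≤ i → i < H → y i v ≤ y i q)
    (c : V → ℕ)
    (hc : ∀ v : V, c v ∈ Icc 1 H ∧ y (c v) v = 0 ∧ z v (c v) = 0) :
    (∀ v : V, c v ≤ c q) ∧
    (Finset.image c Finset.univ).card ≤ 1 + ∑ i ∈ Icc 1 H, y i q := by
  -- Antitonicity of y on [1, H]
  have hanti : ∀ v : V, ∀ i j : ℕ, 1 ≤ i → i ≤ j → j ≤ H → y j v ≤ y i v := by
    intro v i j hi hij hjH
    induction j, hij using Nat.le_induction with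
    | base => exact le_rfl
    | succ j hij ih =>
      exact le_trans (hmono v j (le_trans hi hij) (by omega)) (ih (by omega))
  -- y i v = 1 for 1 ≤ i < c v
  have hone : ∀ v : V, ∀ i : ℕ, 1 ≤ i → i < c v → y i v = 1 := by
    intro v i hi hicv
    obtain ⟨hcv, hycv, hzcv⟩ := hc v
    simp only [mem_Icc] at hcv
    have h1 : y (c v - 1) v = 1 := by
      have := hcomp v (c v - 1) (by omega) (by omega)
      rw [show c v - 1 + 1 = c v by omega, hzcv] at this
      omega
    have := hanti v i (c v - 1) hi (by omega) (by omega)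
    have hb := hybin i (mem_Icc.mpr ⟨hi, by omega⟩) v
    omega
  -- y i v = 0 for c v ≤ i ≤ H
  have hzero : ∀ v : V, ∀ i : ℕ, c v ≤ i → i ≤ H → y i v = 0 := by
    intro v i hcvi hiH
    obtain ⟨hcv, hycv, hzcv⟩ := hc v
    simp only [mem_Icc] at hcv
    have := hanti v (c v) i hcv.1 hcvi hiH
    omega
  -- the sum identity
  have hsum : ∀ v : V, ∑ i ∈ Icc 1 H, y i v = c v - 1 := by
    intro v
    obtain ⟨hcv, _, _⟩ := hc v
    simp only [mem_Icc] at hcv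
    have : ∑ i ∈ Icc 1 H, y i v = ∑ i ∈ Icc 1 H, (if i < c v then 1 else 0) := by
      refine Finset.sum_congr rfl ?_
      intro i hi
      simp only [mem_Icc] at hi
      by_cases h : i < c v
      · simp [h, hone v i hi.1 h]
      · simp [h, hzero v i (by omega) hi.2]
    rw [this, Finset.sum_boole]
    have hfil : (Icc 1 H).filter (· < c v) = Icc 1 (c v - 1) := by
      ext i
      simp only [mem_filter, mem_Icc]
      omega
    simp [hfil, Nat.card_Icc]
  -- c v ≤ c q
  have hle : ∀ v : V, c v ≤ c q := by
    intro v
    obtain ⟨hcv, _, _⟩ := hc v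
    obtain ⟨hcq, _, _⟩ := hc q
    simp only [mem_Icc] at hcv hcq
    have hsle : ∑ i ∈ Icc 1 H, y i v ≤ ∑ i ∈ Icc 1 H, y i q := by
      refine Finset.sum_le_sum ?_
      intro i hi
      simp only [mem_Icc] at hi
      rcases eq_or_lt_of_le hi.2 with h | h
      · simp [h, hyH]
      · exact hq v i hi.1 h
    have h1 := hsum v
    have h2 := hsum q
    omega
  refine ⟨hle, ?_⟩
  obtain ⟨hcq, _, _⟩ := hc q
  simp only [mem_Icc] at hcq
  have hsub : Finset.image c Finset.univ ⊆ Icc 1 (c q) := by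
    intro x hx
    simp only [mem_image] at hx
    obtain ⟨v, _, rfl⟩ := hx
    obtain ⟨hcv, _, _⟩ := hc v
    simp only [mem_Icc] at hcv
    exact mem_Icc.mpr ⟨hcv.1, hle v⟩
  calc (Finset.image c Finset.univ).card ≤ (Icc 1 (c q)).card :=
        Finset.card_le_card hsub
    _ = c q := by rw [Nat.card_Icc]; omega
    _ = 1 + ∑ i ∈ Icc 1 H, y i q := by rw [hsum q]; omega
end

section
/- The optimal value of the POP integer program equals the chromatic number of G: any feasible solution yields a proper coloring using at most 1 + ∑_i y(i,q) colors, and conversely any proper coloring with k ≤ H colors in which vertex q receives the maximal color k yields a feasible POP solution with objective value k. -/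
open Finset

/-- Feasibility of the POP integer program for graph `G`, colors `1,…,H` and
chosen vertex `q`. -/
def POPFeasible {V : Type*} (G : SimpleGraph V) (H : ℕ) (q : V)
    (y : ℕ → V → ℕ) (z : V → ℕ → ℕ) : Prop :=
  (∀ i ∈ Icc 1 H, ∀ v : V, y i v = 0 ∨ y i v = 1) ∧
  (∀ v : V, ∀ i ∈ Icc 1 H, z v i = 0 ∨ z v i = 1) ∧
  (∀ v : V, z v 1 = 0) ∧
  (∀ v : V, y H v = 0) ∧
  (∀ v : V, ∀ i, 1 ≤ i → i < H → y (i + 1) v ≤ y i v) ∧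
  (∀ v : V, ∀ i, 1 ≤ i → i < H → y i v + z v (i + 1) = 1) ∧
  (∀ u v : V, G.Adj u v → ∀ i ∈ Icc 1 H,
      1 ≤ y i u + z u i + y i v + z v i) ∧
  (∀ v : V, ∀ i, 1 ≤ i → i < H → y i v ≤ y i q)

/-- For a binary antitone sequence on `[1,H]`, a term is `1` iff its index is at
most the sum of the sequence. -/
lemma pop_sum_iff (H : ℕ) (a : ℕ → ℕ)
    (hbin : ∀ i ∈ Icc 1 H, a i = 0 ∨ a i = 1)
    (hmono : ∀ i, 1 ≤ i → i < H → a (i + 1) ≤ a i) :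
    ∀ i ∈ Icc 1 H, (a i = 1 ↔ i ≤ ∑ j ∈ Icc 1 H, a j) := by
  have step : ∀ j, 1 ≤ j → j + 1 ≤ H → a (j + 1) = 1 → a j = 1 := by
    intro j hj hjH h1
    have := hmono j hj (by omega)
    rcases hbin j (by simp; omega) with h | h <;> omega
  have desc : ∀ j, j ≤ H → a j = 1 → ∀ m, 1 ≤ m → m ≤ j → a m = 1 := by
    intro j
    induction j with
    | zero => intro _ _ m hm hmj; omega
    | succ n ih =>
      intro hj ha m hm hmj
      rcases eq_or_lt_of_le hmj with rfl | h
      · exact ha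
      · have hn : a n = 1 := step n (by omega) hj ha
        exact ih (by omega) hn m hm (by omega)
  set S := (Icc 1 H).filter (fun j => a j = 1) with hS
  have hsum : ∑ j ∈ Icc 1 H, a j = S.card := by
    rw [hS, Finset.card_filter]
    refine Finset.sum_congr rfl fun j hj => ?_
    rcases hbin j hj with h | h <;> simp [h]
  intro i hi
  simp only [Finset.mem_Icc] at hi
  rw [hsum]
  constructor
  · intro h1
    have hsub : Icc 1 i ⊆ S := by
      intro m hm
      simp only [Finset.mem_Icc] at hm
      rw [hS, Finset.mem_filter, Finset.mem_Icc]
      exact ⟨⟨hm.1, le_trans hm.2 hi.2⟩, desc i hi.2 h1 m hm.1 hm.2⟩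
    calc i = (Icc 1 i).card := by rw [Nat.card_Icc]; omega
      _ ≤ S.card := Finset.card_le_card hsub
  · intro hle
    by_contra hne
    have hsub : S ⊆ Icc 1 (i - 1) := by
      intro j hj
      rw [hS, Finset.mem_filter, Finset.mem_Icc] at hj
      rw [Finset.mem_Icc]
      refine ⟨hj.1.1, ?_⟩
      by_contra hji
      exact hne (desc j hj.1.2 hj.2 i hi.1 (by omega))
    have := Finset.card_le_card hsub
    rw [Nat.card_Icc] at this
    omega

/-- The optimal value of the POP integer program equals the chromatic number. -/
theorem pop_optimal_value_eq_chromaticNumber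
    {V : Type*} [Fintype V] (G : SimpleGraph V)
    (H k : ℕ) (q : V)
    (hk : G.chromaticNumber = (k : ℕ∞)) (hkH : k ≤ H) :
    IsLeast {n : ℕ | ∃ (y : ℕ → V → ℕ) (z : V → ℕ → ℕ),
        POPFeasible G H q y z ∧ n = 1 + ∑ i ∈ Icc 1 H, y i q} k := by
  have hcol : G.Colorable k := by
    rw [← SimpleGraph.chromaticNumber_le_iff_colorable, hk]
  obtain ⟨C⟩ := hcol
  have hk1 : 1 ≤ k := by
    rcases Nat.eq_zero_or_pos k with rfl | h
    · exact (C q).elim0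
    · exact h
  constructor
  · -- membership: build feasible solution from a coloring
    set c' : V → Fin k := fun v => Equiv.swap (C q) ⟨k - 1, by omega⟩ (C v) with hc'
    have hproper : ∀ u v, G.Adj u v → c' u ≠ c' v := by
      intro u v huv h
      exact C.valid huv (Equiv.injective _ h)
    set f : V → ℕ := fun v => (c' v : ℕ) + 1 with hf
    have hfq : f q = k := by
      simp only [hf, hc', Equiv.swap_apply_left]
      omega
    have hf1 : ∀ v, 1 ≤ f v := fun v => by simp [hf]
    have hfk : ∀ v, f v ≤ k := fun v => by
      have := (c' v).isLt; simp only [hf]; omega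
    refine ⟨fun i v => if i < f v then 1 else 0, fun v i => if f v < i then 1 else 0,
      ⟨?_, ?_, ?_, ?_, ?_, ?_, ?_, ?_⟩, ?_⟩
    · intro i _ v; by_cases h : i < f v <;> simp [h]
    · intro v i _; by_cases h : f v < i <;> simp [h]
    · intro v
      show (if f v < 1 then 1 else 0) = 0
      rw [if_neg (by have := hf1 v; omega)]
    · intro v
      show (if H < f v then 1 else 0) = 0
      rw [if_neg (by have := hfk v; omega)]
    · intro v i _ _
      show (if i + 1 < f v then 1 else 0) ≤ (if i < f v then 1 else 0)
      split_ifs <;> omega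
    · intro v i _ _
      show (if i < f v then 1 else 0) + (if f v < i + 1 then 1 else 0) = 1
      split_ifs <;> omega
    · intro u v huv i hi
      show 1 ≤ (if i < f u then 1 else 0) + (if f u < i then 1 else 0)
          + (if i < f v then 1 else 0) + (if f v < i then 1 else 0)
      have hne : f u ≠ f v := by
        intro h
        refine hproper u v huv (Fin.val_injective ?_)
        simp only [hf] at h
        omega
      split_ifs <;> omega
    · intro v i _ _
      show (if i < f v then 1 else 0) ≤ (if i < f q then 1 else 0)
      have h1 : f v ≤ f q := by rw [hfq]; exact hfk v
      split_ifs <;> omega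
    · -- objective value
      show k = 1 + ∑ i ∈ Icc 1 H, (if i < f q then 1 else 0)
      rw [← Finset.card_filter]
      have hfil : (Icc 1 H).filter (fun i => i < f q) = Finset.Ico 1 k := by
        ext i
        simp only [Finset.mem_filter, Finset.mem_Icc, Finset.mem_Ico, hfq]
        omega
      rw [hfil, Nat.card_Ico]
      omega
  · -- lower bound
    rintro n ⟨y, z, ⟨hbin, hzbin, hz1, hyH, hmono, hyz, hedge, hq⟩, hn⟩
    have hH1 : 1 ≤ H := le_trans hk1 hkH
    set s : V → ℕ := fun v => ∑ i ∈ Icc 1 H, y i v with hs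
    have hsq' : s q = ∑ i ∈ Icc 1 H, y i q := rfl
    have key : ∀ v, ∀ i ∈ Icc 1 H, (y i v = 1 ↔ i ≤ s v) := by
      intro v
      exact pop_sum_iff H (fun i => y i v) (fun i hi => hbin i hi v)
        (fun i h1 h2 => hmono v i h1 h2)
    have hsH : ∀ v, s v < H := by
      intro v
      by_contra h
      have := (key v H (by simp [hH1])).2 (by omega)
      rw [hyH v] at this
      omega
    have hzval : ∀ v, z v (s v + 1) = 0 := by
      intro v
      have hsv := hsH v
      rcases Nat.eq_zero_or_pos (s v) with h0 | h0
      · rw [h0]; exact hz1 v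
      · have hy : y (s v) v = 1 := (key v (s v) (by simp; omega)).2 le_rfl
        have := hyz v (s v) h0 hsv
        omega
    have hyval : ∀ v, y (s v + 1) v = 0 := by
      intro v
      have hsv := hsH v
      have hmem : s v + 1 ∈ Icc 1 H := by simp; omega
      have := (key v (s v + 1) hmem)
      rcases hbin (s v + 1) hmem v with h | h
      · exact h
      · have := this.1 h; omega
    have hproper : ∀ u v, G.Adj u v → s u ≠ s v := by
      intro u v huv heq
      have hmem : s u + 1 ∈ Icc 1 H := by have := hsH u; simp; omega
      have := hedge u v huv (s u + 1) hmem
      rw [hyval u, hzval u, heq, hyval v, hzval v] at this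
      omega
    have hsq : ∀ v, s v ≤ s q := by
      intro v
      refine Finset.sum_le_sum fun i hi => ?_
      simp only [Finset.mem_Icc] at hi
      rcases eq_or_lt_of_le hi.2 with rfl | h
      · rw [hyH v]; omega
      · exact hq v i hi.1 h
    have hcoln : G.Colorable n := by
      refine ⟨SimpleGraph.Coloring.mk
        (fun v => (⟨s v, by have h1 := hsq v; omega⟩ : Fin n))
        fun {u v} huv h => hproper u v huv (by simpa using congrArg Fin.val h)⟩
    have := hcoln.chromaticNumber_le
    rw [hk, Nat.cast_le] at this
    exact this
end

section
/- Given a feasible solution (y,z) of the POP constraints, define x(v,i) = 1 − (y(i,v) + z(v,i)). Then x(v,i) ∈ {0,1} for all v,i, ∑_{i=1}^H x(v,i) = 1 for every vertex v, and x(u,i)+x(v,i) ≤ 1 for every edge (u,v) and color i; i.e., x is a feasible solution of the assignment constraints. -/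
open Finset

/-- Given a feasible solution `(y, z)` of the POP constraints, the assignment
variables `x v i = 1 - (y i v + z v i)` form a feasible solution of the
assignment constraints. -/
theorem pop_to_assignment
    {V : Type*} (G : SimpleGraph V) (H : ℕ) (hH : 1 ≤ H)
    (y : ℕ → V → ℤ) (z : V → ℕ → ℤ)
    (hybin : ∀ i ∈ Icc 1 H, ∀ v : V, y i v = 0 ∨ y i v = 1)
    (hzbin : ∀ v : V, ∀ i ∈ Icc 1 H, z v i = 0 ∨ z v i = 1)
    (hz1 : ∀ v : V, z v 1 = 0)
    (hyH : ∀ v : V, y H v = 0)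
    (hmono : ∀ v : V, ∀ i, 1 ≤ i → i < H → y (i + 1) v ≤ y i v)
    (hcomp : ∀ v : V, ∀ i, 1 ≤ i → i < H → y i v + z v (i + 1) = 1)
    (hedge : ∀ u v : V, G.Adj u v → ∀ i ∈ Icc 1 H,
      1 ≤ y i u + z u i + y i v + z v i)
    (x : V → ℕ → ℤ)
    (hx : ∀ v i, x v i = 1 - (y i v + z v i)) :
    (∀ v : V, ∀ i ∈ Icc 1 H, x v i = 0 ∨ x v i = 1) ∧
    (∀ v : V, ∑ i ∈ Icc 1 H, x v i = 1) ∧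
    (∀ u v : V, G.Adj u v → ∀ i ∈ Icc 1 H, x u i + x v i ≤ 1) := by
  -- s v i = y i v + z v i is 0 or 1 on Icc 1 H
  have hs : ∀ v : V, ∀ i ∈ Icc 1 H, y i v + z v i = 0 ∨ y i v + z v i = 1 := by
    intro v i hi
    rw [mem_Icc] at hi
    obtain ⟨h1, h2⟩ := hi
    rcases Nat.eq_or_lt_of_le h1 with h | h
    · rw [← h, hz1]
      have := hybin 1 (by simp [mem_Icc, hH]) v
      omega
    · obtain ⟨j, rfl⟩ : ∃ j, i = j + 1 := ⟨i - 1, by omega⟩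
      have hj1 : 1 ≤ j := by omega
      have hjH : j < H := by omega
      have hc := hcomp v j hj1 hjH
      have hm := hmono v j hj1 hjH
      have hb1 := hybin j (by simp [mem_Icc]; omega) v
      have hb2 := hybin (j + 1) (by simp [mem_Icc]; omega) v
      omega
  -- telescoping sum
  have hsum : ∀ v : V, ∀ n, 1 ≤ n → n ≤ H →
      ∑ i ∈ Icc 1 n, (y i v + z v i) = (n : ℤ) - 1 + y n v := by
    intro v n h1 h2
    induction n with
    | zero => omega
    | succ m ih =>
      rcases Nat.eq_or_lt_of_le h1 with h | h
      · simp [← h, hz1 v]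
      · have hm1 : 1 ≤ m := by omega
        have hmH : m < H := by omega
        rw [Finset.sum_Icc_succ_top (by omega), ih hm1 (by omega)]
        have := hcomp v m hm1 hmH
        push_cast
        linarith
  refine ⟨?_, ?_, ?_⟩
  · intro v i hi
    have := hs v i hi
    rw [hx]
    omega
  · intro v
    have h1 : ∑ i ∈ Icc 1 H, x v i = ∑ i ∈ Icc 1 H, (1 - (y i v + z v i)) := by
      apply Finset.sum_congr rfl
      intro i _; exact hx v i
    rw [h1, Finset.sum_sub_distrib, hsum v H hH le_rfl, hyH v]
    simp [Nat.card_Icc]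
  · intro u v huv i hi
    have := hedge u v huv i hi
    rw [hx, hx]
    linarith
end

section
/- Let c be a proper coloring of G with colors in {1,…,H} and suppose vertex q satisfies c(q) ≥ c(v) for all v. Define y(i,v) = 1 if c(v) > i else 0, and z(v,i) = 1 if c(v) < i else 0. Then (y,z) satisfies all POP constraints: z(v,1)=0, y(H,v)=0, y(i,v) ≥ y(i+1,v), y(i,v)+z(v,i+1)=1, y(i,u)+z(u,i)+y(i,v)+z(v,i) ≥ 1 for edges (u,v), and y(i,q) ≥ y(i,v); moreover 1 + ∑_{i=1}^H y(i,q) = c(q). -/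
open Finset

/-- A proper coloring `c` with colors in `{1,…,H}` in which `q` receives the
maximal color induces a feasible solution of the POP constraints of objective
value `c q`. -/
theorem coloring_gives_pop_solution
    {V : Type*} (G : SimpleGraph V)
    (H : ℕ) (hH : 1 ≤ H) (q : V)
    (c : V → ℕ)
    (hrange : ∀ v : V, c v ∈ Icc 1 H)
    (hproper : ∀ u v : V, G.Adj u v → c u ≠ c v)
    (hmax : ∀ v : V, c v ≤ c q)
    (y : ℕ → V → ℕ) (z : V → ℕ → ℕ)
    (hy : ∀ i (v : V), y i v = if i < c v then 1 else 0)
    (hz : ∀ (v : V) i, z v i = if c v < i then 1 else 0) :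
    (∀ i ∈ Icc 1 H, ∀ v : V, y i v = 0 ∨ y i v = 1) ∧
    (∀ v : V, ∀ i ∈ Icc 1 H, z v i = 0 ∨ z v i = 1) ∧
    (∀ v : V, z v 1 = 0) ∧
    (∀ v : V, y H v = 0) ∧
    (∀ v : V, ∀ i, 1 ≤ i → i < H → y (i + 1) v ≤ y i v) ∧
    (∀ v : V, ∀ i, 1 ≤ i → i < H → y i v + z v (i + 1) = 1) ∧
    (∀ u v : V, G.Adj u v → ∀ i ∈ Icc 1 H,
        1 ≤ y i u + z u i + y i v + z v i) ∧
    (∀ v : V, ∀ i, 1 ≤ i → i < H → y i v ≤ y i q) ∧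
    1 + ∑ i ∈ Icc 1 H, y i q = c q := by
  refine ⟨?_, ?_, ?_, ?_, ?_, ?_, ?_, ?_, ?_⟩
  · intro i _ v; rw [hy]; split <;> simp
  · intro v i _; rw [hz]; split <;> simp
  · intro v; rw [hz]; have := (mem_Icc.mp (hrange v)).1; simp; omega
  · intro v; rw [hy]; have := (mem_Icc.mp (hrange v)).2; simp; omega
  · intro v i _ _; rw [hy, hy]; split <;> split <;> omega
  · intro v i _ _; rw [hy, hz]; split <;> split <;> omega
  · intro u v huv i _
    rw [hy, hz, hy, hz]
    have := hproper u v huv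
    split <;> split <;> split <;> split <;> omega
  · intro v i _ _; rw [hy, hy]; have := hmax v; split <;> split <;> omega
  · have h1 := (mem_Icc.mp (hrange q)).1
    have h2 := (mem_Icc.mp (hrange q)).2
    have : ∑ i ∈ Icc 1 H, y i q = ∑ i ∈ Icc 1 H, if i < c q then 1 else 0 := by
      exact Finset.sum_congr rfl fun i _ => hy i q
    rw [this, Finset.sum_boole]
    have hf : Finset.filter (fun i => i < c q) (Icc 1 H) = Ico 1 (c q) := by
      ext i; simp [mem_filter, mem_Icc, mem_Ico]; omega
    push_cast [hf, Nat.card_Ico]; omega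
end
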